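/- arXiv:1307.5377 — 2 statements merged into one kernel-verified Lean document; each statement's English description precedes it below -/
import Mathlib

section
/- Let (A,λ,L) and (A',λ',L) be Pom_L-bisimilar labelled asynchronous systems. Then for every word w = a₁⋯a_k ∈ E* with k ≥ 0 such that s₀·w is defined, there exists a word w' = a₁'⋯a_k' ∈ E'* of the same length such that s₀'·w' is defined and the labelled asynchronous systems (A(s₀·w),λ,L) and (A'(s₀'·w'),λ',L) are Pom_L-bisimilar. -/
/-- An asynchronous (transition) system: a state space with an initial state,
in which every event occurs in at least one transition. -/
structure AsyncSystem (S E : Type) where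
  init : S
  indep : E → E → Prop
  tran : S → E → S → Prop
  indep_symm : ∀ a b, indep a b → indep b a
  indep_irrefl : ∀ a, ¬ indep a a
  det : ∀ s a s' s'', tran s a s' → tran s a s'' → s' = s''
  diamond : ∀ a b s s' s'', indep a b → tran s a s' → tran s' b s'' →
    ∃ s₁, tran s b s₁ ∧ tran s₁ a s''
  event_occurs : ∀ e, ∃ s₁ s₂, tran s₁ e s₂

/-- A state is reachable if there is a finite sequence of transitions from the
initial state to it. -/
def AsyncSystem.Reachable {S E : Type} (A : AsyncSystem S E) (s : S) : Prop :=
  Relation.ReflTransGen (fun x y => ∃ e, A.tran x e y) A.init s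

/-- `A.rebase s` is the asynchronous system `A(s)`: `A` with initial state replaced by `s`. -/
def AsyncSystem.rebase {S E : Type} (A : AsyncSystem S E) (s : S) : AsyncSystem S E :=
  { A with init := s }

/-- `A.Exec s w t` means `s · w = t`: the word `w` can be executed from `s`, ending in `t`. -/
def AsyncSystem.Exec {S E : Type} (A : AsyncSystem S E) : S → List E → S → Prop
  | s, [], t => s = t
  | s, e :: w, t => ∃ u, A.tran s e u ∧ A.Exec u w t

/-- A morphism of asynchronous systems with a total event map `η`. -/
def IsMorphism {S E S' E' : Type} (A : AsyncSystem S E) (A' : AsyncSystem S' E')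
    (σ : S → S') (η : E → E') : Prop :=
  σ A.init = A'.init ∧
  (∀ s₁ e s₂, A.tran s₁ e s₂ → A'.tran (σ s₁) (η e) (σ s₂)) ∧
  (∀ e₁ e₂, A.indep e₁ e₂ → A'.indep (η e₁) (η e₂))

/-- An open morphism of asynchronous systems (its event map is total). -/
def IsOpenMorphism {S E S' E' : Type} (A : AsyncSystem S E) (A' : AsyncSystem S' E')
    (σ : S → S') (η : E → E') : Prop :=
  IsMorphism A A' σ η ∧
  (∀ s e' u', A'.tran (σ s) e' u' → ∃ e u, A.tran s e u ∧ η e = e' ∧ σ u = u') ∧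
  (∀ s, A.Reachable s → ∀ e₁ e₂ u v, A.tran s e₁ u → A.tran u e₂ v →
    A'.indep (η e₁) (η e₂) → A.indep e₁ e₂)

/-- A `Pom_L`-open morphism of labelled asynchronous systems: an open morphism
preserving labels. -/
def IsPomOpen {S E S' E' L : Type} (A : AsyncSystem S E) (lab : E → L)
    (A' : AsyncSystem S' E') (lab' : E' → L) (σ : S → S') (η : E → E') : Prop :=
  IsOpenMorphism A A' σ η ∧ ∀ e, lab' (η e) = lab e

/-- Two labelled asynchronous systems are `Pom_L`-bisimilar if there is a third labelled
asynchronous system with `Pom_L`-open morphisms to each of them. -/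
def Bisimilar {S E S' E' L : Type} (A : AsyncSystem S E) (lab : E → L)
    (A' : AsyncSystem S' E') (lab' : E' → L) : Prop :=
  ∃ (S'' E'' : Type) (A'' : AsyncSystem S'' E'') (lab'' : E'' → L)
    (σ : S'' → S) (η : E'' → E) (σ' : S'' → S') (η' : E'' → E'),
    IsPomOpen A'' lab'' A lab σ η ∧ IsPomOpen A'' lab'' A' lab' σ' η'

/-- `Qn A n`: pairs of a reachable state `s` and an `n`-tuple of pairwise independent
events executable from `s`.  For `n = 0` this is the set of reachable states. -/
def Qn {S E : Type} (A : AsyncSystem S E) (n : ℕ) : Set (S × (Fin n → E)) :=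
  {p | A.Reachable p.1 ∧ (∃ t, A.Exec p.1 (List.ofFn p.2) t) ∧
    ∀ i j : Fin n, i < j → A.indep (p.2 i) (p.2 j)}

/-- The vertex set `λ⁺E` of the simplicial scheme of a labelled asynchronous system. -/
def VertexSet {S E L : Type} (A : AsyncSystem S E) (lab : E → L) : Set L :=
  {l | ∃ (a : E) (s u : S), A.Reachable s ∧ A.tran s a u ∧ lab a = l}

/-- The simplices of the simplicial scheme of a labelled asynchronous system:
finite nonempty sets `{λ(a₁), …, λ(a_k)}` (`k ≥ 1`) where the `aᵢ` are pairwise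
independent and `s · a₁ ⋯ a_k` is defined for some reachable state `s`. -/
def Simplices {S E L : Type} (A : AsyncSystem S E) (lab : E → L) : Set (Set L) :=
  {X | ∃ (k : ℕ) (a : Fin (k + 1) → E) (s : S),
    A.Reachable s ∧
    (∀ i j, i < j → A.indep (a i) (a j)) ∧
    (∃ t, A.Exec s (List.ofFn a) t) ∧
    X = Set.range fun i => lab (a i)}

lemma exec_lift {S E S' E' : Type} {A : AsyncSystem S E} {A' : AsyncSystem S' E'}
    {σ : S → S'} {η : E → E'} (h : IsOpenMorphism A A' σ η) :
    ∀ (w' : List E') (s : S) (t' : S'), A'.Exec (σ s) w' t' →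
      ∃ (w : List E) (t : S), A.Exec s w t ∧ w.map η = w' ∧ σ t = t' := by
  intro w'
  induction w' with
  | nil => intro s t' hex; exact ⟨[], s, rfl, rfl, hex⟩
  | cons e' w' ih =>
    intro s t' hex
    obtain ⟨u', hu', hrest⟩ := hex
    obtain ⟨e, u, htr, he, hu⟩ := h.2.1 s e' u' hu'
    obtain ⟨w, t, hexw, hmap, hσ⟩ := ih u t' (hu ▸ hrest)
    exact ⟨e :: w, t, ⟨u, htr, hexw⟩, by simp [he, hmap], hσ⟩

lemma exec_push {S E S' E' : Type} {A : AsyncSystem S E} {A' : AsyncSystem S' E'}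
    {σ : S → S'} {η : E → E'} (h : IsMorphism A A' σ η) :
    ∀ (w : List E) (s t : S), A.Exec s w t → A'.Exec (σ s) (w.map η) (σ t) := by
  intro w
  induction w with
  | nil => intro s t hex; exact congrArg σ hex
  | cons e w ih =>
    intro s t hex
    obtain ⟨u, htr, hrest⟩ := hex
    exact ⟨σ u, h.2.1 s e u htr, ih u t hrest⟩

lemma exec_reachable {S E : Type} {A : AsyncSystem S E} :
    ∀ (w : List E) (s t : S), A.Exec s w t →
      Relation.ReflTransGen (fun x y => ∃ e, A.tran x e y) s t := by
  intro w
  induction w with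
  | nil => intro s t hex; exact hex ▸ Relation.ReflTransGen.refl
  | cons e w ih =>
    intro s t hex
    obtain ⟨u, htr, hrest⟩ := hex
    exact Relation.ReflTransGen.head ⟨e, htr⟩ (ih u t hrest)

lemma pomOpen_rebase {S E S' E' L : Type} {A : AsyncSystem S E} {lab : E → L}
    {A' : AsyncSystem S' E'} {lab' : E' → L} {σ : S → S'} {η : E → E'}
    (h : IsPomOpen A lab A' lab' σ η) (s : S) (hs : A.Reachable s) :
    IsPomOpen (A.rebase s) lab (A'.rebase (σ s)) lab' σ η := by
  obtain ⟨⟨⟨_, htr, hind⟩, hopen, hrev⟩, hlab⟩ := h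
  refine ⟨⟨⟨rfl, htr, hind⟩, hopen, ?_⟩, hlab⟩
  intro x hx e₁ e₂ u v h1 h2 h3
  exact hrev x (hs.trans hx) e₁ e₂ u v h1 h2 h3

/-- if `(A, λ, L)` and `(A', λ', L)` are `Pom_L`-bisimilar, then for every
word `w = a₁ ⋯ a_k` with `s₀ · w` defined there is a word `w' = a₁' ⋯ a_k'` of the same
length with `s₀' · w'` defined such that `(A(s₀ · w), λ, L)` and `(A'(s₀' · w'), λ', L)`
are `Pom_L`-bisimilar. -/
theorem bisimilar_word {S E S' E' L : Type}
    (A : AsyncSystem S E) (lab : E → L) (A' : AsyncSystem S' E') (lab' : E' → L)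
    (h : Bisimilar A lab A' lab')
    (w : List E) (t : S) (hw : A.Exec A.init w t) :
    ∃ (w' : List E') (t' : S'), w'.length = w.length ∧ A'.Exec A'.init w' t' ∧
      Bisimilar (A.rebase t) lab (A'.rebase t') lab' := by
  obtain ⟨S'', E'', A'', lab'', σ, η, σ', η', h1, h2⟩ := h
  have hinit : σ A''.init = A.init := h1.1.1.1
  obtain ⟨w'', t'', hex'', hmap, hσt⟩ := exec_lift h1.1 w A''.init t (by rw [hinit]; exact hw)
  refine ⟨w''.map η', σ' t'', ?_, ?_, ?_⟩
  · simp [← hmap]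
  · have := exec_push h2.1.1 w'' A''.init t'' hex''
    rwa [h2.1.1.1] at this
  · have hreach : A''.Reachable t'' := exec_reachable w'' A''.init t'' hex''
    refine ⟨S'', E'', A''.rebase t'', lab'', σ, η, σ', η', ?_, ?_⟩
    · have := pomOpen_rebase ⟨h1.1, h1.2⟩ t'' hreach
      rwa [hσt] at this
    · exact pomOpen_rebase ⟨h2.1, h2.2⟩ t'' hreach
end

section
/- If the labelled asynchronous systems (A,λ,L) and (A',λ',L) are Pom_L-bisimilar, then their associated simplicial schemes are equal: the vertex sets λ⁺E and λ'⁺E' coincide, and a finite nonempty subset of L is a simplex of the scheme of (A,λ,L) if and only if it is a simplex of the scheme of (A',λ',L). (Consequently, the homology groups of the two labelled asynchronous systems are isomorphic in every degree.) -/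
section Helpers

variable {S E S' E' L : Type}

lemma reach_step {A : AsyncSystem S E} {s t : S} {e : E}
    (hs : A.Reachable s) (h : A.tran s e t) : A.Reachable t :=
  hs.tail ⟨e, h⟩

lemma reach_of_exec {A : AsyncSystem S E} :
    ∀ (w : List E) (s t : S), A.Reachable s → A.Exec s w t → A.Reachable t := by
  intro w
  induction w with
  | nil => intro s t hs h; cases h; exact hs
  | cons e w ih =>
    rintro s t hs ⟨u, hu, hw⟩
    exact ih u t (reach_step hs hu) hw

lemma map_exec {A : AsyncSystem S E} {A' : AsyncSystem S' E'} {σ : S → S'} {η : E → E'}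
    (hm : IsMorphism A A' σ η) :
    ∀ (w : List E) (s t : S), A.Exec s w t → A'.Exec (σ s) (w.map η) (σ t) := by
  intro w
  induction w with
  | nil => intro s t h; cases h; rfl
  | cons e w ih =>
    rintro s t ⟨u, hu, hw⟩
    exact ⟨σ u, hm.2.1 _ _ _ hu, ih u t hw⟩

lemma map_reach {A : AsyncSystem S E} {A' : AsyncSystem S' E'} {σ : S → S'} {η : E → E'}
    (hm : IsMorphism A A' σ η) {s : S} (hs : A.Reachable s) : A'.Reachable (σ s) := by
  induction hs with
  | refl => rw [hm.1]; exact Relation.ReflTransGen.refl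
  | tail _ h ih => obtain ⟨e, he⟩ := h; exact reach_step ih (hm.2.1 _ _ _ he)

lemma lift_reach {A : AsyncSystem S E} {A' : AsyncSystem S' E'} {σ : S → S'} {η : E → E'}
    (ho : IsOpenMorphism A A' σ η) {s' : S'} (hs' : A'.Reachable s') :
    ∃ s : S, A.Reachable s ∧ σ s = s' := by
  induction hs' with
  | refl => exact ⟨A.init, Relation.ReflTransGen.refl, ho.1.1⟩
  | tail _ h ih =>
    obtain ⟨s, hs, rfl⟩ := ih
    obtain ⟨e', he'⟩ := h
    obtain ⟨e, u, hu, _, hσu⟩ := ho.2.1 s e' _ he'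
    exact ⟨u, reach_step hs hu, hσu⟩

lemma lift_exec {A : AsyncSystem S E} {A' : AsyncSystem S' E'} {σ : S → S'} {η : E → E'}
    (ho : IsOpenMorphism A A' σ η) :
    ∀ (w' : List E') (s : S) (t' : S'), A'.Exec (σ s) w' t' →
      ∃ (w : List E) (t : S), A.Exec s w t ∧ w.map η = w' ∧ σ t = t' := by
  intro w'
  induction w' with
  | nil => intro s t' h; exact ⟨[], s, rfl, rfl, h⟩
  | cons e' w' ih =>
    rintro s t' ⟨u', hu', hw'⟩
    obtain ⟨e, u, hu, rfl, rfl⟩ := ho.2.1 s e' u' hu'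
    obtain ⟨w, t, hw, hmap, hσt⟩ := ih u t' hw'
    exact ⟨e :: w, t, ⟨u, hu, hw⟩, by simp [hmap], hσt⟩

/-- If `a` can be commuted past each element of `w`, `s·(a::w)` traverses the same
endpoint as `s·(w++[a])`. We only need the weaker swap at the head. -/
lemma swap_head {A : AsyncSystem S E} {a b : E} {s u v : S}
    (hab : A.indep a b) (ha : A.tran s a u) (hb : A.tran u b v) :
    ∃ s₁, A.tran s b s₁ ∧ A.tran s₁ a v :=
  A.diamond a b s u v hab ha hb

lemma step_indep {A : AsyncSystem S E} {A' : AsyncSystem S' E'} {σ : S → S'} {η : E → E'}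
    (ho : IsOpenMorphism A A' σ η) :
    ∀ (w : List E) (a : E) (s t : S), A.Reachable s → A.Exec s (a :: w) t →
      (∀ b ∈ w, A'.indep (η a) (η b)) → ∀ b ∈ w, A.indep a b := by
  intro w
  induction w with
  | nil => intro a s t _ _ _ b hb; cases hb
  | cons c w ih =>
    rintro a s t hs ⟨u, hu, v, hv, hw⟩ hind b hb
    have hac : A.indep a c :=
      ho.2.2 s hs a c u v hu hv (hind c List.mem_cons_self)
    rcases List.mem_cons.1 hb with rfl | hb
    · exact hac
    · obtain ⟨s₁, hs₁, ha₁⟩ := swap_head hac hu hv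
      exact ih a s₁ t (reach_step hs hs₁) ⟨v, ha₁, hw⟩
        (fun b hb => hind b (List.mem_cons_of_mem _ hb)) b hb

lemma pairwise_indep {A : AsyncSystem S E} {A' : AsyncSystem S' E'} {σ : S → S'} {η : E → E'}
    (ho : IsOpenMorphism A A' σ η) :
    ∀ (w : List E) (s t : S), A.Reachable s → A.Exec s w t →
      (w.map η).Pairwise A'.indep → w.Pairwise A.indep := by
  intro w
  induction w with
  | nil => intro _ _ _ _ _; exact List.Pairwise.nil
  | cons a w ih =>
    rintro s t hs ⟨u, hu, hw⟩ hp
    rw [List.map_cons, List.pairwise_cons] at hp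
    refine List.Pairwise.cons ?_ (ih u t (reach_step hs hu) hw hp.2)
    exact step_indep ho w a s t hs ⟨u, hu, hw⟩
      (fun b hb => hp.1 (η b) (List.mem_map_of_mem hb))

lemma scheme_subset_of_pomopen
    {A : AsyncSystem S E} {lab : E → L} {A' : AsyncSystem S' E'} {lab' : E' → L}
    {σ : S → S'} {η : E → E'} (h : IsPomOpen A lab A' lab' σ η) :
    VertexSet A lab = VertexSet A' lab' ∧ Simplices A lab = Simplices A' lab' := by
  obtain ⟨ho, hlab⟩ := h
  have hm : IsMorphism A A' σ η := ho.1
  constructor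
  · ext l
    constructor
    · rintro ⟨a, s, u, hs, ht, rfl⟩
      exact ⟨η a, σ s, σ u, map_reach hm hs, hm.2.1 _ _ _ ht, hlab a⟩
    · rintro ⟨a', s', u', hs', ht', rfl⟩
      obtain ⟨s, hs, rfl⟩ := lift_reach ho hs'
      obtain ⟨e, u, hu, rfl, _⟩ := ho.2.1 s a' u' ht'
      exact ⟨e, s, u, hs, hu, (hlab e).symm⟩
  · ext X
    constructor
    · rintro ⟨k, a, s, hs, hind, ⟨t, ht⟩, rfl⟩
      refine ⟨k, η ∘ a, σ s, map_reach hm hs, fun i j hij => hm.2.2 _ _ (hind i j hij),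
        ⟨σ t, ?_⟩, ?_⟩
      · have := map_exec hm (List.ofFn a) s t ht
        rwa [List.map_ofFn] at this
      · ext l
        simp only [Set.mem_range, Function.comp_apply, hlab]
    · rintro ⟨k, a', s', hs', hind', ⟨t', ht'⟩, rfl⟩
      obtain ⟨s, hs, rfl⟩ := lift_reach ho hs'
      obtain ⟨w, t, hw, hmap, _⟩ := lift_exec ho (List.ofFn a') s t' ht'
      have hlen : w.length = k + 1 := by
        have := congrArg List.length hmap
        simpa using this
      set a : Fin (k + 1) → E := fun i => w.get (Fin.cast hlen.symm i) with ha
      have hofn : List.ofFn a = w := by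
        apply List.ext_getElem
        · simp [hlen]
        · intro i h1 h2
          simp only [ha, List.getElem_ofFn, List.get_eq_getElem, Fin.coe_cast]
      have heta : ∀ i : Fin (k + 1), η (a i) = a' i := by
        intro i
        have h1 : (w.map η)[(i : ℕ)]'(by simp [hlen]; exact Fin.is_le i) =
            (List.ofFn a')[(i : ℕ)]'(by simp; exact Fin.is_le i) := List.getElem_of_eq hmap _
        simpa only [ha, List.getElem_map, List.getElem_ofFn, List.get_eq_getElem,
          Fin.coe_cast, Fin.eta] using h1
      have hpw : w.Pairwise A.indep := by
        refine pairwise_indep ho w s t hs hw ?_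
        rw [hmap, List.pairwise_iff_getElem]
        intro i j h1 h2 hij
        have := hind' ⟨i, by simpa using h1⟩ ⟨j, by simpa using h2⟩ (by simpa using hij)
        simpa only [List.getElem_ofFn] using this
      have hindA : ∀ i j : Fin (k + 1), i < j → A.indep (a i) (a j) := by
        rw [← hofn, List.pairwise_iff_getElem] at hpw
        intro i j hij
        have := hpw i j (by simp; exact Fin.is_le i) (by simp; exact Fin.is_le j) (by exact_mod_cast hij)
        simpa only [List.getElem_ofFn, Fin.eta] using this
      refine ⟨k, a, s, hs, hindA, ⟨t, by rw [hofn]; exact hw⟩, ?_⟩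
      ext l
      simp only [Set.mem_range]
      constructor
      · rintro ⟨i, rfl⟩; exact ⟨i, by rw [← heta i, hlab]⟩
      · rintro ⟨i, rfl⟩; exact ⟨i, by rw [← heta i, hlab]⟩

end Helpers

/-- `Pom_L`-bisimilar labelled asynchronous systems have equal associated
simplicial schemes: the vertex sets `λ⁺E` and `λ'⁺E'` coincide, and a subset of `L` is a
simplex of the scheme of `(A, λ, L)` iff it is a simplex of the scheme of `(A', λ', L)`. -/
theorem bisimilar_schemes_eq {S E S' E' L : Type}
    (A : AsyncSystem S E) (lab : E → L) (A' : AsyncSystem S' E') (lab' : E' → L)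
    (h : Bisimilar A lab A' lab') :
    VertexSet A lab = VertexSet A' lab' ∧ Simplices A lab = Simplices A' lab' := by
  obtain ⟨S'', E'', A'', lab'', σ, η, σ', η', h1, h2⟩ := h
  obtain ⟨hv1, hs1⟩ := scheme_subset_of_pomopen h1
  obtain ⟨hv2, hs2⟩ := scheme_subset_of_pomopen h2
  exact ⟨hv1 ▸ hv2, hs1 ▸ hs2⟩
end
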